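/- Fix a packet size d > 0 and a blocklength m > 0, and let ω(γ) = √(m / V(γ)) · (C(γ) − d/m) · ln 2 with C(γ) = log₂(1+γ) and V(γ) = 1 − (1+γ)^{−2}. Then the second derivative of ω with respect to γ is nonpositive for all γ > 0; in particular, γ ↦ ω(γ) is concave on (0, ∞). -/

import Mathlib

/-- The Gaussian Q-function `Q(x) = ∫ₓ^∞ (1/√(2π)) e^{−t²/2} dt`. -/
noncomputable def gaussianQ (x : ℝ) : ℝ :=
  ∫ t in Set.Ioi x, (Real.sqrt (2 * Real.pi))⁻¹ * Real.exp (-t ^ 2 / 2)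

/-- Shannon capacity `C(γ) = log₂(1+γ)`. -/
noncomputable def Cap (γ : ℝ) : ℝ := Real.logb 2 (1 + γ)

/-- Channel dispersion `V(γ) = 1 − (1+γ)^{−2}`. -/
noncomputable def Vdisp (γ : ℝ) : ℝ := 1 - ((1 + γ) ^ 2)⁻¹

/-- The finite-blocklength auxiliary function
`ω(m,γ) = √(m / V(γ)) · (C(γ) − d/m) · ln 2`. -/
noncomputable def ωfbl (d γ m : ℝ) : ℝ :=
  Real.sqrt (m / Vdisp γ) * (Cap γ - d / m) * Real.log 2

/-- For fixed `d > 0` and `m > 0`, the second derivative of `γ ↦ ω(γ)`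
is nonpositive for all `γ > 0`; in particular `γ ↦ ω(γ)` is concave on `(0, ∞)`. -/


-- key inequality
lemma keyineq {x : ℝ} (hx : 1 < x) : 3 * x ^ 2 * Real.log x ≤ x ^ 4 - 1 := by
  have hx0 : (0:ℝ) < x := by linarith
  have hlog : Real.log x ≤ x - 1 := Real.log_le_sub_one_of_pos hx0
  nlinarith [sq_nonneg x, sq_nonneg (x-1), mul_pos hx0 hx0]

noncomputable def ff (c x : ℝ) : ℝ := x * (Real.log x - c) / Real.sqrt (x ^ 2 - 1)
noncomputable def ff1 (c x : ℝ) : ℝ :=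
  (x ^ 2 - 1 + c - Real.log x) / (Real.sqrt (x ^ 2 - 1)) ^ 3
noncomputable def ff2 (c x : ℝ) : ℝ :=
  ((2 * x - 1 / x) * (Real.sqrt (x ^ 2 - 1)) ^ 3 -
      (x ^ 2 - 1 + c - Real.log x) * (3 * x * Real.sqrt (x ^ 2 - 1))) /
    ((Real.sqrt (x ^ 2 - 1)) ^ 3) ^ 2

lemma hs_deriv {x : ℝ} (hx : 1 < x) :
    HasDerivAt (fun y : ℝ => Real.sqrt (y ^ 2 - 1)) (x / Real.sqrt (x ^ 2 - 1)) x := by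
  have h1 : (0:ℝ) < x ^ 2 - 1 := by nlinarith
  have hinner : HasDerivAt (fun y : ℝ => y ^ 2 - 1) (2 * x) x := by
    simpa using (hasDerivAt_pow 2 x).sub_const 1
  have := (Real.hasDerivAt_sqrt h1.ne').comp x hinner
  refine this.congr_deriv (Eq.symm ?_)
  have hs : Real.sqrt (x ^ 2 - 1) ≠ 0 := by positivity
  field_simp

lemma hf_deriv {c x : ℝ} (hx : 1 < x) : HasDerivAt (ff c) (ff1 c x) x := by
  have hx0 : (0:ℝ) < x := by linarith
  have h1 : (0:ℝ) < x ^ 2 - 1 := by nlinarith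
  have hspos : (0:ℝ) < Real.sqrt (x ^ 2 - 1) := Real.sqrt_pos.2 h1
  have hs : Real.sqrt (x ^ 2 - 1) ≠ 0 := hspos.ne'
  have hs2 : Real.sqrt (x ^ 2 - 1) ^ 2 = x ^ 2 - 1 := Real.sq_sqrt h1.le
  have hu : HasDerivAt (fun y : ℝ => y * (Real.log y - c))
      (1 * (Real.log x - c) + x * x⁻¹) x :=
    (hasDerivAt_id x).mul ((Real.hasDerivAt_log hx0.ne').sub_const c)
  have := hu.div (hs_deriv hx) hs
  refine this.congr_deriv (Eq.symm ?_)
  unfold ff1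
  rw [div_eq_div_iff (by positivity) (by positivity)]
  field_simp
  linear_combination (-(1 + Real.log x - c)) * hs2

lemma hf1_deriv {c x : ℝ} (hx : 1 < x) : HasDerivAt (ff1 c) (ff2 c x) x := by
  have hx0 : (0:ℝ) < x := by linarith
  have h1 : (0:ℝ) < x ^ 2 - 1 := by nlinarith
  have hspos : (0:ℝ) < Real.sqrt (x ^ 2 - 1) := Real.sqrt_pos.2 h1
  have hs : Real.sqrt (x ^ 2 - 1) ≠ 0 := hspos.ne'
  have hs2 : Real.sqrt (x ^ 2 - 1) ^ 2 = x ^ 2 - 1 := Real.sq_sqrt h1.le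
  have hu : HasDerivAt (fun y : ℝ => y ^ 2 - 1 + c - Real.log y) (2 * x - 1 / x) x := by
    have := (((hasDerivAt_pow 2 x).sub_const 1).add_const c).sub (Real.hasDerivAt_log hx0.ne')
    refine this.congr_deriv (Eq.symm ?_)
    ring
  have ht : HasDerivAt (fun y : ℝ => (Real.sqrt (y ^ 2 - 1)) ^ 3)
      (3 * x * Real.sqrt (x ^ 2 - 1)) x := by
    have := (hs_deriv hx).pow 3
    refine this.congr_deriv (Eq.symm ?_)
    field_simp
    norm_num
  have ht3 : (Real.sqrt (x ^ 2 - 1)) ^ 3 ≠ 0 := by positivity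
  exact hu.div ht ht3

lemma ff2_nonpos {c x : ℝ} (hc : 0 < c) (hx : 1 < x) : ff2 c x ≤ 0 := by
  have hx0 : (0:ℝ) < x := by linarith
  have h1 : (0:ℝ) < x ^ 2 - 1 := by nlinarith
  have hspos : (0:ℝ) < Real.sqrt (x ^ 2 - 1) := Real.sqrt_pos.2 h1
  have hs2 : Real.sqrt (x ^ 2 - 1) ^ 2 = x ^ 2 - 1 := Real.sq_sqrt h1.le
  set s := Real.sqrt (x ^ 2 - 1) with hsdef
  unfold ff2
  rw [div_nonpos_iff]
  right
  constructor
  · -- numerator ≤ 0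
    have hnum : (2 * x - 1 / x) * s ^ 3 - (x ^ 2 - 1 + c - Real.log x) * (3 * x * s)
        = s * ((2 * x - 1 / x) * (x ^ 2 - 1) - 3 * x * (x ^ 2 - 1 + c - Real.log x)) := by
      rw [← hs2]; ring
    rw [hnum]
    apply mul_nonpos_of_nonneg_of_nonpos hspos.le
    have hxN : x * ((2 * x - 1 / x) * (x ^ 2 - 1) - 3 * x * (x ^ 2 - 1 + c - Real.log x)) ≤ 0 := by
      have hinv : x * (1 / x) = 1 := by field_simp
      nlinarith [keyineq hx, mul_pos hc (mul_pos hx0 hx0)]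
    nlinarith [mul_pos hx0 hx0]
  · positivity

lemma omega_eq (d : ℝ) {m : ℝ} (hm : 0 < m) {γ : ℝ} (hγ : 0 < γ) :
    ωfbl d γ m = Real.sqrt m * ff (d / m * Real.log 2) (1 + γ) := by
  have hx0 : (0:ℝ) < 1 + γ := by linarith
  have h1 : (0:ℝ) < (1 + γ) ^ 2 - 1 := by nlinarith
  have hspos : (0:ℝ) < Real.sqrt ((1 + γ) ^ 2 - 1) := Real.sqrt_pos.2 h1
  have hl2 : Real.log 2 ≠ 0 := (Real.log_pos one_lt_two).ne'
  have hV : Vdisp γ = ((1 + γ) ^ 2 - 1) / (1 + γ) ^ 2 := by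
    unfold Vdisp; field_simp
  have hsq : Real.sqrt (m / Vdisp γ)
      = Real.sqrt m * (1 + γ) / Real.sqrt ((1 + γ) ^ 2 - 1) := by
    rw [Real.sqrt_div hm.le, hV, Real.sqrt_div h1.le, Real.sqrt_sq hx0.le]
    field_simp
  unfold ωfbl ff Cap
  rw [hsq, Real.logb]
  field_simp

theorem statement9 (d m : ℝ) (hd : 0 < d) (hm : 0 < m) :
    (∀ γ > (0 : ℝ), deriv (deriv (fun y => ωfbl d y m)) γ ≤ 0) ∧
    ConcaveOn ℝ (Set.Ioi (0 : ℝ)) (fun y => ωfbl d y m) := by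
  have hc : 0 < d / m * Real.log 2 := mul_pos (div_pos hd hm) (Real.log_pos one_lt_two)
  set c := d / m * Real.log 2 with hcdef
  have hEq : Set.EqOn (fun y => ωfbl d y m) (fun y => Real.sqrt m * ff c (1 + y))
      (Set.Ioi 0) := fun y hy => omega_eq d hm hy
  have hg_deriv : ∀ γ ∈ Set.Ioi (0:ℝ),
      HasDerivAt (fun y => Real.sqrt m * ff c (1 + y)) (Real.sqrt m * ff1 c (1 + γ)) γ := by
    intro γ hγ
    have hx : (1:ℝ) < 1 + γ := by simpa using hγ
    have h := (hf_deriv (c := c) hx).comp γ ((hasDerivAt_id γ).const_add 1)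
    simpa using h.const_mul (Real.sqrt m)
  have hg1_deriv : ∀ γ ∈ Set.Ioi (0:ℝ),
      HasDerivAt (fun y => Real.sqrt m * ff1 c (1 + y)) (Real.sqrt m * ff2 c (1 + γ)) γ := by
    intro γ hγ
    have hx : (1:ℝ) < 1 + γ := by simpa using hγ
    have h := (hf1_deriv (c := c) hx).comp γ ((hasDerivAt_id γ).const_add 1)
    simpa using h.const_mul (Real.sqrt m)
  have hω_deriv : ∀ γ ∈ Set.Ioi (0:ℝ),
      HasDerivAt (fun y => ωfbl d y m) (Real.sqrt m * ff1 c (1 + γ)) γ := by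
    intro γ hγ
    exact (hg_deriv γ hγ).congr_of_eventuallyEq
      (hEq.eventuallyEq_of_mem (Ioi_mem_nhds hγ))
  have hderiv_eq : Set.EqOn (deriv (fun y => ωfbl d y m))
      (fun y => Real.sqrt m * ff1 c (1 + y)) (Set.Ioi 0) :=
    fun γ hγ => (hω_deriv γ hγ).deriv
  have hω_deriv2 : ∀ γ ∈ Set.Ioi (0:ℝ),
      HasDerivAt (deriv (fun y => ωfbl d y m)) (Real.sqrt m * ff2 c (1 + γ)) γ := by
    intro γ hγ
    exact (hg1_deriv γ hγ).congr_of_eventuallyEq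
      (hderiv_eq.eventuallyEq_of_mem (Ioi_mem_nhds hγ))
  have hsign : ∀ γ ∈ Set.Ioi (0:ℝ), deriv (deriv (fun y => ωfbl d y m)) γ ≤ 0 := by
    intro γ hγ
    have hx : (1:ℝ) < 1 + γ := by simpa using hγ
    rw [(hω_deriv2 γ hγ).deriv]
    exact mul_nonpos_of_nonneg_of_nonpos (Real.sqrt_nonneg m) (ff2_nonpos hc hx)
  refine ⟨fun γ hγ => hsign γ hγ, ?_⟩
  apply concaveOn_of_deriv2_nonpos (convex_Ioi 0)
  · exact fun y hy => ((hω_deriv y hy).differentiableAt).continuousAt.continuousWithinAt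
  · rw [interior_Ioi]
    exact fun y hy => ((hω_deriv y hy).differentiableAt).differentiableWithinAt
  · rw [interior_Ioi]
    exact fun y hy => ((hω_deriv2 y hy).differentiableAt).differentiableWithinAt
  · rw [interior_Ioi]
    intro y hy
    have : deriv^[2] (fun y => ωfbl d y m) y = deriv (deriv (fun y => ωfbl d y m)) y := rfl
    rw [this]
    exact hsign y hy
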